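/- Let W be an n₂×n₁ matrix, J₁ a k₁×n₁ matrix, J₂ a k₂×n₂ matrix, x a unit vector in ℝ^{n₁}, and ε ≤ 1. Suppose ‖x − J₁ᵀJ₁x‖ ≤ ε and ‖WJ₁ᵀJ₁x − J₂ᵀJ₂WJ₁ᵀJ₁x‖ ≤ ε‖WJ₁ᵀJ₁x‖. Then ‖J₂ᵀJ₂WJ₁ᵀJ₁x − Wx‖ ≤ 3ε‖W‖, where ‖W‖ is the spectral norm. -/

import Mathlib

open Matrix

theorem stmt_2 {n₁ n₂ k₁ k₂ : ℕ} (W : Matrix (Fin n₂) (Fin n₁) ℝ)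
    (J₁ : Matrix (Fin k₁) (Fin n₁) ℝ) (J₂ : Matrix (Fin k₂) (Fin n₂) ℝ)
    (x : EuclideanSpace ℝ (Fin n₁)) (ε : ℝ) (hε0 : 0 < ε) (hε : ε ≤ 1)
    (hx : ‖x‖ = 1)
    (h1 : ‖x - Matrix.toEuclideanLin (J₁ᵀ * J₁) x‖ ≤ ε)
    (h2 : ‖Matrix.toEuclideanLin W (Matrix.toEuclideanLin (J₁ᵀ * J₁) x) -
            Matrix.toEuclideanLin (J₂ᵀ * J₂)
              (Matrix.toEuclideanLin W (Matrix.toEuclideanLin (J₁ᵀ * J₁) x))‖ ≤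
          ε * ‖Matrix.toEuclideanLin W (Matrix.toEuclideanLin (J₁ᵀ * J₁) x)‖) :
    ‖Matrix.toEuclideanLin (J₂ᵀ * J₂)
        (Matrix.toEuclideanLin W (Matrix.toEuclideanLin (J₁ᵀ * J₁) x)) -
        Matrix.toEuclideanLin W x‖ ≤
      3 * ε * ‖(Matrix.toEuclideanLin W).toContinuousLinearMap‖ := by
  set C := (Matrix.toEuclideanLin W).toContinuousLinearMap with hC
  set y := Matrix.toEuclideanLin (J₁ᵀ * J₁) x with hy
  have hCW : ∀ v, Matrix.toEuclideanLin W v = C v := fun v => rfl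
  have hCn : 0 ≤ ‖C‖ := norm_nonneg _
  have hyn : ‖y‖ ≤ 1 + ε := by
    calc ‖y‖ = ‖x - (x - y)‖ := by rw [sub_sub_cancel]
    _ ≤ ‖x‖ + ‖x - y‖ := norm_sub_le _ _
    _ ≤ 1 + ε := by rw [hx]; exact add_le_add_right h1 _
  have hz : ‖Matrix.toEuclideanLin W y‖ ≤ 2 * ‖C‖ := by
    rw [hCW]
    calc ‖C y‖ ≤ ‖C‖ * ‖y‖ := C.le_opNorm y
    _ ≤ ‖C‖ * 2 := by
        apply mul_le_mul_of_nonneg_left _ hCn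
        linarith
    _ = 2 * ‖C‖ := by ring
  have hWxy : ‖Matrix.toEuclideanLin W y - Matrix.toEuclideanLin W x‖ ≤ ε * ‖C‖ := by
    rw [hCW, hCW, ← map_sub]
    calc ‖C (y - x)‖ ≤ ‖C‖ * ‖y - x‖ := C.le_opNorm _
    _ ≤ ‖C‖ * ε := by
        apply mul_le_mul_of_nonneg_left _ hCn
        rwa [norm_sub_rev]
    _ = ε * ‖C‖ := by ring
  calc ‖Matrix.toEuclideanLin (J₂ᵀ * J₂) (Matrix.toEuclideanLin W y) -
        Matrix.toEuclideanLin W x‖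
      ≤ ‖Matrix.toEuclideanLin (J₂ᵀ * J₂) (Matrix.toEuclideanLin W y) -
          Matrix.toEuclideanLin W y‖ +
        ‖Matrix.toEuclideanLin W y - Matrix.toEuclideanLin W x‖ :=
        norm_sub_le_norm_sub_add_norm_sub _ _ _
    _ ≤ ε * ‖Matrix.toEuclideanLin W y‖ + ε * ‖C‖ := by
        apply add_le_add _ hWxy
        rw [norm_sub_rev]; exact h2
    _ ≤ ε * (2 * ‖C‖) + ε * ‖C‖ := by
        apply add_le_add_left
        exact mul_le_mul_of_nonneg_left hz hε0.le
    _ = 3 * ε * ‖C‖ := by ring
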